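/- Let T^1 = KR_right(S,A)^1 for a finite semigroup S generated by a finite alphabet A, and let D be the Lyndon–Chiswell length function on T^1. For all α, β, γ ∈ T^1, D(γα, γβ) ≥ D(α, β). -/

import Mathlib

open scoped Classical

namespace KRHolonomy

/-- Green's quasi-order `≤_J` on a monoid: `a ≤_J b` iff `a ∈ M b M`. -/
def leJ {M : Type*} [Monoid M] (a b : M) : Prop := ∃ x y : M, a = x * b * y

/-- `a <_J b` iff `a ≤_J b` and not `b ≤_J a`. -/
def ltJ {M : Type*} [Monoid M] (a b : M) : Prop := leJ a b ∧ ¬ leJ b a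

/-- Green's quasi-order `≤_R` on a monoid: `a ≤_R b` iff `a ∈ b M`. -/
def leR {M : Type*} [Monoid M] (a b : M) : Prop := ∃ x : M, a = b * x

/-- `a <_R b` iff `a ≤_R b` and not `b ≤_R a`. -/
def ltR {M : Type*} [Monoid M] (a b : M) : Prop := leR a b ∧ ¬ leR b a

/-- Green's quasi-order `≤_L` on a monoid: `a ≤_L b` iff `a ∈ M b`. -/
def leL {M : Type*} [Monoid M] (a b : M) : Prop := ∃ x : M, a = x * b

/-- `a <_L b` iff `a ≤_L b` and not `b ≤_L a`. -/
def ltL {M : Type*} [Monoid M] (a b : M) : Prop := leL a b ∧ ¬ leL b a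

/-- The Dedekind height function: `height x` is the largest `k` such that there is a chain
`x₀ >_J x₁ >_J ⋯ >_J x_k = x`. -/
noncomputable def height {M : Type*} [Monoid M] (x : M) : ℕ :=
  sSup {k | ∃ c : ℕ → M, c k = x ∧ ∀ i < k, ltJ (c (i + 1)) (c i)}

variable {A S : Type*} [Semigroup S]

/-- The edge `(s, a, s·θ(a))` of the right Cayley graph of `(S,A)` is a transition edge:
there is no path in the right Cayley graph from `s·θ(a)` back to `s`. -/
def IsTransitionEdge (θ : FreeMonoid A →* WithOne S) (s : WithOne S) (a : A) : Prop :=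
  ¬ ∃ w : FreeMonoid A, s * θ (FreeMonoid.of a) * θ w = s

/-- The (ordered) sequence of transition edges along the path of the right Cayley graph
starting at `s` and reading the word `u`; an edge is recorded as a pair (source, label). -/
noncomputable def transEdgesFrom (θ : FreeMonoid A →* WithOne S) :
    WithOne S → List A → List (WithOne S × A)
  | _, [] => []
  | s, a :: w =>
      (if IsTransitionEdge θ s a then [(s, a)] else []) ++
        transEdgesFrom θ (s * θ (FreeMonoid.of a)) w

/-- The sequence of transition edges of the path starting at `1` reading `u`. -/
noncomputable def transEdges (θ : FreeMonoid A →* WithOne S) (u : FreeMonoid A) :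
    List (WithOne S × A) :=
  transEdgesFrom θ 1 (FreeMonoid.toList u)

/-- The congruence (`τ_r`, together with `(1,1)`) defining the right Karnofsky–Rhodes
expansion: two words of `A^*` represent the same element of `KR_right(S,A)¹` iff they are
both empty or both nonempty, they have the same image in `S¹` and the same sequence of
transition edges. -/
def KRrel (θ : FreeMonoid A →* WithOne S) (u v : FreeMonoid A) : Prop :=
  (u = 1 ∧ v = 1) ∨
    (u ≠ 1 ∧ v ≠ 1 ∧ θ u = θ v ∧ transEdges θ u = transEdges θ v)

/-- Green's quasi-order `≤_J` on `T¹ = KR_right(S,A)¹`, expressed on word representatives: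
`u ≤_J v` iff `u = p v q` holds in `T¹` for some `p, q ∈ T¹`. -/
def leJT (θ : FreeMonoid A →* WithOne S) (u v : FreeMonoid A) : Prop :=
  ∃ p q : FreeMonoid A, KRrel θ u (p * v * q)

/-- `<_J` on `T¹ = KR_right(S,A)¹`, expressed on word representatives. -/
def ltJT (θ : FreeMonoid A →* WithOne S) (u v : FreeMonoid A) : Prop :=
  leJT θ u v ∧ ¬ leJT θ v u

/-- The Dedekind height function on `T¹ = KR_right(S,A)¹`, expressed on word
representatives: the largest `k` such that there is a chain
`t₀ >_J t₁ >_J ⋯ >_J t_k = t` in `T¹`. -/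
noncomputable def heightT (θ : FreeMonoid A →* WithOne S) (u : FreeMonoid A) : ℕ :=
  sSup {k | ∃ c : ℕ → FreeMonoid A, KRrel θ (c k) u ∧ ∀ i < k, ltJT θ (c (i + 1)) (c i)}

/-- `ℓ = 2 · max { h(s) : s ∈ S¹ }`. -/
noncomputable def ell (S : Type*) [Semigroup S] : ℕ :=
  2 * sSup (Set.range fun s : WithOne S => height s)

/-- `ξ(u,v)`: the largest `i` (with `0 ≤ i ≤ m`, `m` the number of transition edges of `u`)
such that the first `i` transition edges of `u` and of `v` agree. -/
noncomputable def xi (θ : FreeMonoid A →* WithOne S) (u v : FreeMonoid A) : ℕ :=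
  sSup {i | i ≤ (transEdges θ u).length ∧
    (transEdges θ u).take i = (transEdges θ v).take i}

/-- The endpoint of an edge `(s, a)` of the right Cayley graph, namely `s·θ(a)`. -/
def edgeEnd (θ : FreeMonoid A →* WithOne S) (e : WithOne S × A) : WithOne S :=
  e.1 * θ (FreeMonoid.of e.2)

/-- The Lyndon–Chiswell length function `D` on `T¹ = KR_right(S,A)¹`, expressed on word
representatives.  With `k = ξ(u,v)` (and indexing the transition edges from `1` as in the
paper, so that `E_k` sits at list index `k-1`):
`D(u,v) = ℓ` if `u = v` in `T¹`; `D(u,v) = 0` if `u ≠ v` in `T¹` and `k = 0`;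
`D(u,v) = 2·h(end(E_k))` if `k > 0`, `E_{k+1}` and `E'_{k+1}` both exist and have the same
endpoint; and `D(u,v) = 2·h(end(E_k)) - 1` in all remaining cases. -/
noncomputable def lcD (θ : FreeMonoid A →* WithOne S) (u v : FreeMonoid A) : ℕ :=
  if KRrel θ u v then ell S
  else if xi θ u v = 0 then 0
  else
    let k := xi θ u v
    let base := (transEdges θ u)[k - 1]?.elim 0 fun e => height (edgeEnd θ e)
    if ∃ e e', (transEdges θ u)[k]? = some e ∧ (transEdges θ v)[k]? = some e' ∧
        edgeEnd θ e = edgeEnd θ e'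
    then 2 * base
    else 2 * base - 1

/-- The relation `∼` on `C = {(k,α) : 0 ≤ k ≤ ℓ, α ∈ T¹}`:
`(k,α) ∼ (k',β)` iff `k = k'` and `D(α,β) ≥ k`. -/
def simRel (θ : FreeMonoid A →* WithOne S)
    (p q : {p : ℕ × FreeMonoid A // p.1 ≤ ell S}) : Prop :=
  p.val.1 = q.val.1 ∧ lcD θ p.val.2 q.val.2 ≥ p.val.1

/-- The vertex set of the Chiswell tree: `∼`-classes `[k,α]`. -/
def CVert (θ : FreeMonoid A →* WithOne S) : Type _ := Quot (simRel θ)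

/-- The edge relation of the Chiswell graph: the edges are `[k,α] — [k+1,α]`
for `0 ≤ k < ℓ` and `α ∈ T¹`. -/
def edgeRel (θ : FreeMonoid A →* WithOne S) (v w : CVert θ) : Prop :=
  ∃ (k : ℕ) (α : FreeMonoid A) (hk : k + 1 ≤ ell S),
    v = Quot.mk (simRel θ) ⟨(k, α), Nat.le_of_succ_le hk⟩ ∧
    w = Quot.mk (simRel θ) ⟨(k + 1, α), hk⟩

/-- The Chiswell graph `𝒞`. -/
def CGraph (θ : FreeMonoid A →* WithOne S) : SimpleGraph (CVert θ) :=
  SimpleGraph.fromRel (edgeRel θ)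

/-- The depth function of the Chiswell tree: `δ([k,α]) = k`. -/
def depth (θ : FreeMonoid A →* WithOne S) : CVert θ → ℕ :=
  Quot.lift (fun p => p.val.1) (fun _ _ h => h.1)

section HeightLemmas
variable {M : Type*} [Monoid M]

lemma leJ_refl (a : M) : leJ a a := ⟨1, 1, by simp⟩

lemma leJ_trans {a b c : M} (h1 : leJ a b) (h2 : leJ b c) : leJ a c := by
  obtain ⟨x, y, rfl⟩ := h1; obtain ⟨x', y', rfl⟩ := h2
  exact ⟨x * x', y' * y, by simp [mul_assoc]⟩

lemma ltJ_of_ltJ_of_leJ {a b c : M} (h1 : ltJ a b) (h2 : leJ b c) : ltJ a c :=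
  ⟨leJ_trans h1.1 h2, fun h => h1.2 (leJ_trans h2 h)⟩

lemma ltJ_irrefl (a : M) : ¬ ltJ a a := fun h => h.2 (leJ_refl a)

/-- chain elements are strictly decreasing hence injective -/
lemma chain_strict {c : ℕ → M} {k : ℕ} (hc : ∀ i < k, ltJ (c (i + 1)) (c i))
    {i j : ℕ} (hij : i < j) (hj : j ≤ k) : ltJ (c j) (c i) := by
  induction j with
  | zero => omega
  | succ n ih =>
    rcases Nat.lt_or_ge i n with h | h
    · exact ltJ_of_ltJ_of_leJ (hc n (by omega)) (ih h (by omega)).1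
    · have : i = n := by omega
      subst this; exact hc i (by omega)

def chainSet (x : M) : Set ℕ := {k | ∃ c : ℕ → M, c k = x ∧ ∀ i < k, ltJ (c (i + 1)) (c i)}

lemma chainSet_nonempty (x : M) : (chainSet x).Nonempty :=
  ⟨0, fun _ => x, rfl, by omega⟩

lemma chainSet_bddAbove [Finite M] (x : M) : BddAbove (chainSet x) := by
  refine ⟨Nat.card M, fun k hk => ?_⟩
  obtain ⟨c, hck, hc⟩ := hk
  have hinj : Function.Injective (fun i : Fin (k+1) => c i) := by
    intro i j hij
    by_contra hne
    rcases Nat.lt_or_ge i.1 j.1 with h | h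
    · have hij' : c i.1 = c j.1 := hij
      exact (chain_strict hc h (by omega)).2 (hij' ▸ leJ_refl (c j.1))
    · have h' : j.1 < i.1 := by
        rcases Nat.lt_or_ge j.1 i.1 with h' | h'
        · exact h'
        · exact absurd (Fin.ext (by omega)) hne
      have hij' : c i.1 = c j.1 := hij
      exact (chain_strict hc h' (by omega)).2 (hij' ▸ leJ_refl (c i.1))
  have hcard := Nat.card_le_card_of_injective _ hinj
  rw [Nat.card_eq_fintype_card, Fintype.card_fin] at hcard
  omega

lemma chainSet_le_card [Finite M] (x : M) {k : ℕ} (hk : k ∈ chainSet x) :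
    k ≤ Nat.card M := by
  obtain ⟨c, hck, hc⟩ := hk
  have hinj : Function.Injective (fun i : Fin (k+1) => c i) := by
    intro i j hij
    by_contra hne
    rcases Nat.lt_or_ge i.1 j.1 with h | h
    · have hij' : c i.1 = c j.1 := hij
      exact (chain_strict hc h (by omega)).2 (hij' ▸ leJ_refl (c j.1))
    · have h' : j.1 < i.1 := by
        rcases Nat.lt_or_ge j.1 i.1 with h' | h'
        · exact h'
        · exact absurd (Fin.ext (by omega)) hne
      have hij' : c i.1 = c j.1 := hij
      exact (chain_strict hc h' (by omega)).2 (hij' ▸ leJ_refl (c i.1))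
  have hcard := Nat.card_le_card_of_injective _ hinj
  rw [Nat.card_eq_fintype_card, Fintype.card_fin] at hcard
  omega

lemma height_le_card [Finite M] (x : M) : height x ≤ Nat.card M :=
  csSup_le (chainSet_nonempty x) fun _ hk => chainSet_le_card x hk

lemma height_eq_sSup (x : M) : height x = sSup (chainSet x) := rfl

lemma height_mem [Finite M] (x : M) : height x ∈ chainSet x :=
  Nat.sSup_mem (chainSet_nonempty x) (chainSet_bddAbove x)

lemma height_le_of_leJ [Finite M] {a b : M} (h : leJ a b) : height b ≤ height a := by
  apply csSup_le_csSup (chainSet_bddAbove a) (chainSet_nonempty b)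
  rintro k ⟨c, hck, hc⟩
  refine ⟨fun i => if i = k then a else c i, by simp, fun i hi => ?_⟩
  rcases Nat.lt_or_ge (i+1) k with h1 | h1
  · simp only [if_neg (by omega : ¬ i + 1 = k), if_neg (by omega : ¬ i = k)]
    exact hc i hi
  · have hik : i + 1 = k := by omega
    simp only [if_pos hik, if_neg (by omega : ¬ i = k)]
    have hlt : ltJ (c k) (c i) := by
      have := hc i hi; rwa [hik] at this
    rw [hck] at hlt
    exact ⟨leJ_trans h hlt.1, fun hca => hlt.2 (leJ_trans hca h)⟩

lemma height_lt_of_ltJ [Finite M] {a b : M} (h : ltJ a b) : height b < height a := by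
  obtain ⟨c, hck, hc⟩ := height_mem b
  have : height b + 1 ∈ chainSet a := by
    refine ⟨fun i => if i ≤ height b then c i else a, by simp, fun i hi => ?_⟩
    rcases Nat.lt_or_ge i (height b) with h1 | h1
    · simp only [if_pos (by omega : i + 1 ≤ height b), if_pos (by omega : i ≤ height b)]
      exact hc i h1
    · have hik : i = height b := by omega
      subst hik
      beta_reduce
      rw [if_neg (by omega : ¬ height b + 1 ≤ height b), if_pos (le_refl (height b)), hck]
      exact h
  have hle : height b + 1 ≤ height a := le_csSup (chainSet_bddAbove a) this
  omega

end HeightLemmas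
section Aux2
variable {A S : Type*} [Semigroup S] (θ : FreeMonoid A →* WithOne S)

lemma theta_surj (hgen : ∀ s : S, ∃ u : FreeMonoid A, θ u = (s : WithOne S)) :
    ∀ x : WithOne S, ∃ w : FreeMonoid A, θ w = x := by
  intro x
  rcases x with _ | s
  · exact ⟨1, map_one θ⟩
  · exact hgen s

instance _root_.WithOne.instFiniteKR {X : Type*} [Finite X] : Finite (WithOne X) := by
  have := Fintype.ofFinite X
  exact inferInstanceAs (Finite (Option X))

/-- Stability in a finite monoid: if `s ≤_R s·t` is witnessed J-above, return exists. -/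
lemma finite_stab {M : Type*} [Monoid M] [Finite M] {s t x y : M}
    (hxy : s = x * (s * t) * y) : ∃ u : M, s * t * u = s := by
  have hstep : s = x * s * (t * y) := by
    conv_lhs => rw [hxy]
    simp [mul_assoc]
  have hiter : ∀ n : ℕ, s = x ^ n * s * (t * y) ^ n := by
    intro n
    induction n with
    | zero => simp
    | succ n ih =>
      have hre : x ^ (n+1) * s * (t * y) ^ (n+1) = x ^ n * (x * s * (t * y)) * (t * y) ^ n := by
        rw [pow_succ x n, pow_succ' (t*y) n]
        simp [mul_assoc]
      rw [hre, ← hstep, ← ih]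
  obtain ⟨i, i', hne, heq⟩ := Finite.exists_ne_map_eq_of_infinite (fun n : ℕ => (t * y) ^ n)
  wlog hlt : i < i' generalizing i i'
  · exact this i' i hne.symm heq.symm (by omega)
  set p := i' - i with hp
  have heq' : (t * y) ^ i = (t * y) ^ i' := heq
  have hpow : (t * y) ^ i = (t * y) ^ (i + p) := by
    rw [heq']; congr 1; omega
  have hsp : s = s * (t * y) ^ p := by
    calc s = x ^ i * s * (t * y) ^ i := hiter i
    _ = x ^ i * s * (t * y) ^ i * (t * y) ^ p := by
        rw [mul_assoc _ _ ((t*y)^p), ← pow_add, ← hpow]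
    _ = s * (t * y) ^ p := by rw [← hiter i]
  have hp1 : 1 ≤ p := by omega
  refine ⟨y * (t * y) ^ (p - 1), ?_⟩
  have hdec : (t * y) ^ p = t * (y * (t * y) ^ (p - 1)) := by
    conv_lhs => rw [show p = 1 + (p - 1) by omega]
    rw [pow_add, pow_one, mul_assoc]
  rw [mul_assoc, ← hdec, ← hsp]

lemma not_leJ_of_transition [Finite S]
    (hgen : ∀ s : S, ∃ u : FreeMonoid A, θ u = (s : WithOne S))
    {s : WithOne S} {a : A} (h : IsTransitionEdge θ s a) :
    ¬ leJ s (s * θ (FreeMonoid.of a)) := by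
  rintro ⟨x, y, hxy⟩
  obtain ⟨u, hu⟩ := finite_stab hxy
  obtain ⟨w, hw⟩ := theta_surj θ hgen u
  exact h ⟨w, by rw [hw]; exact hu⟩

lemma ltJ_end_of_transition [Finite S]
    (hgen : ∀ s : S, ∃ u : FreeMonoid A, θ u = (s : WithOne S))
    {s : WithOne S} {a : A} (h : IsTransitionEdge θ s a) :
    ltJ (s * θ (FreeMonoid.of a)) s :=
  ⟨⟨1, θ (FreeMonoid.of a), by simp⟩, not_leJ_of_transition θ hgen h⟩

end Aux2
section Lists
variable {A S : Type*} [Semigroup S] (θ : FreeMonoid A →* WithOne S)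

/-- The effect of left-multiplying the start by `t` on a transition-edge list. -/
noncomputable def gshift (t : WithOne S) (l : List (WithOne S × A)) : List (WithOne S × A) :=
  l.filterMap fun e => if IsTransitionEdge θ (t * e.1) e.2 then some (t * e.1, e.2) else none

lemma gshift_append (t : WithOne S) (l1 l2 : List (WithOne S × A)) :
    gshift θ t (l1 ++ l2) = gshift θ t l1 ++ gshift θ t l2 :=
  List.filterMap_append

lemma transEdgesFrom_nil (s : WithOne S) : transEdgesFrom θ s [] = [] := rfl

lemma transEdgesFrom_cons (s : WithOne S) (a : A) (l : List A) :
    transEdgesFrom θ s (a :: l) =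
      (if IsTransitionEdge θ s a then [(s, a)] else []) ++
        transEdgesFrom θ (s * θ (FreeMonoid.of a)) l := rfl

lemma exists_return_of_not_transition {s : WithOne S} {a : A}
    (h : ¬ IsTransitionEdge θ s a) : ∃ w, s * θ (FreeMonoid.of a) * θ w = s :=
  not_not.mp h

lemma isTransitionEdge_of_shift {t s : WithOne S} {a : A}
    (h : IsTransitionEdge θ (t * s) a) : IsTransitionEdge θ s a := by
  rintro ⟨w, hw⟩
  exact h ⟨w, by rw [mul_assoc t s, mul_assoc t, hw]⟩

lemma transEdgesFrom_shift : ∀ (l : List A) (s t : WithOne S),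
    transEdgesFrom θ (t * s) l = gshift θ t (transEdgesFrom θ s l) := by
  intro l
  induction l with
  | nil => intro s t; rfl
  | cons a l ih =>
    intro s t
    rw [transEdgesFrom_cons, transEdgesFrom_cons, gshift_append, mul_assoc, ih (s * θ (FreeMonoid.of a)) t]
    congr 1
    by_cases h : IsTransitionEdge θ (t * s) a
    · have h' : IsTransitionEdge θ s a := isTransitionEdge_of_shift θ h
      rw [if_pos h, if_pos h']
      simp [gshift, if_pos h]
    · rw [if_neg h]
      by_cases h' : IsTransitionEdge θ s a
      · rw [if_pos h']
        simp [gshift, if_neg h]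
      · rw [if_neg h']
        simp [gshift]

lemma transEdgesFrom_append : ∀ (l1 l2 : List A) (s : WithOne S),
    transEdgesFrom θ s (l1 ++ l2) =
      transEdgesFrom θ s l1 ++ transEdgesFrom θ (s * θ (FreeMonoid.ofList l1)) l2 := by
  intro l1
  induction l1 with
  | nil =>
    intro l2 s
    have h1 : (FreeMonoid.ofList ([] : List A)) = 1 := rfl
    simp [transEdgesFrom_nil, h1]
  | cons a l ih =>
    intro l2 s
    rw [List.cons_append, transEdgesFrom_cons, transEdgesFrom_cons, ih, List.append_assoc]
    congr 3
    have : FreeMonoid.ofList (a :: l) = FreeMonoid.of a * FreeMonoid.ofList l := rfl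
    rw [this, map_mul, mul_assoc]

lemma transEdges_mul (u v : FreeMonoid A) :
    transEdges θ (u * v) = transEdges θ u ++ gshift θ (θ u) (transEdges θ v) := by
  rw [transEdges, FreeMonoid.toList_mul, transEdgesFrom_append]
  congr 1
  rw [transEdges, ← transEdgesFrom_shift]
  congr 1
  have : FreeMonoid.ofList (FreeMonoid.toList u) = u := rfl
  rw [this, one_mul, mul_one]

end Lists
section Paths
variable {A S : Type*} [Semigroup S] (θ : FreeMonoid A →* WithOne S)

lemma ofList_cons (a : A) (l : List A) :
    FreeMonoid.ofList (a :: l) = FreeMonoid.of a * FreeMonoid.ofList l := rfl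

lemma mul_ofList_cons (s : WithOne S) (a : A) (l : List A) :
    s * θ (FreeMonoid.ofList (a :: l)) = (s * θ (FreeMonoid.of a)) * θ (FreeMonoid.ofList l) := by
  rw [ofList_cons, map_mul, mul_assoc]

/-- Every recorded edge has source reachable from the start and is a transition edge. -/
lemma source_mem : ∀ (l : List A) (s : WithOne S) (q : ℕ) (e : WithOne S × A),
    (transEdgesFrom θ s l)[q]? = some e →
    (∃ w, s * θ w = e.1) ∧ IsTransitionEdge θ e.1 e.2 := by
  intro l
  induction l with
  | nil => intro s q e h; simp [transEdgesFrom_nil] at h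
  | cons a l ih =>
    intro s q e h
    rw [transEdgesFrom_cons] at h
    by_cases ht : IsTransitionEdge θ s a
    · rw [if_pos ht, List.singleton_append] at h
      rcases q with _ | q
      · rw [List.getElem?_cons_zero] at h
        obtain rfl : (s, a) = e := by injection h
        exact ⟨⟨1, by simp⟩, ht⟩
      · rw [List.getElem?_cons_succ] at h
        obtain ⟨⟨w, hw⟩, h2⟩ := ih (s * θ (FreeMonoid.of a)) q e h
        exact ⟨⟨FreeMonoid.of a * w, by rw [map_mul, ← mul_assoc, hw]⟩, h2⟩
    · rw [if_neg ht, List.nil_append] at h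
      obtain ⟨⟨w, hw⟩, h2⟩ := ih (s * θ (FreeMonoid.of a)) q e h
      exact ⟨⟨FreeMonoid.of a * w, by rw [map_mul, ← mul_assoc, hw]⟩, h2⟩

lemma end_mem (l : List A) (s : WithOne S) (q : ℕ) (e : WithOne S × A)
    (h : (transEdgesFrom θ s l)[q]? = some e) :
    ∃ w, s * θ w = edgeEnd θ e := by
  obtain ⟨⟨w, hw⟩, _⟩ := source_mem θ l s q e h
  exact ⟨w * FreeMonoid.of e.2, by rw [map_mul, ← mul_assoc, hw, edgeEnd]⟩

/-- The source of the next edge is reachable from the end of the previous one. -/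
lemma chain_source : ∀ (l : List A) (s : WithOne S) (q : ℕ) (e e' : WithOne S × A),
    (transEdgesFrom θ s l)[q]? = some e → (transEdgesFrom θ s l)[q+1]? = some e' →
    ∃ w, edgeEnd θ e * θ w = e'.1 := by
  intro l
  induction l with
  | nil => intro s q e e' h _; simp [transEdgesFrom_nil] at h
  | cons a l ih =>
    intro s q e e' h h'
    rw [transEdgesFrom_cons] at h h'
    by_cases ht : IsTransitionEdge θ s a
    · rw [if_pos ht, List.singleton_append] at h h'
      rcases q with _ | q
      · rw [List.getElem?_cons_zero] at h
        obtain rfl : (s, a) = e := by injection h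
        rw [List.getElem?_cons_succ] at h'
        obtain ⟨⟨w, hw⟩, _⟩ := source_mem θ l (s * θ (FreeMonoid.of a)) 0 e' h'
        exact ⟨w, by rw [edgeEnd]; exact hw⟩
      · rw [List.getElem?_cons_succ] at h h'
        exact ih (s * θ (FreeMonoid.of a)) q e e' h h'
    · rw [if_neg ht, List.nil_append] at h h'
      exact ih (s * θ (FreeMonoid.of a)) q e e' h h'

/-- If a path segment contains no transition edges, the start is recoverable from the end. -/
lemma return_of_nil : ∀ (l : List A) (s : WithOne S),
    transEdgesFrom θ s l = [] → ∃ w, s * θ (FreeMonoid.ofList l) * θ w = s := by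
  intro l
  induction l with
  | nil =>
    intro s _
    refine ⟨1, ?_⟩
    have h1 : (FreeMonoid.ofList ([] : List A)) = 1 := rfl
    simp [h1]
  | cons a l ih =>
    intro s h
    rw [transEdgesFrom_cons] at h
    rcases List.append_eq_nil_iff.mp h with ⟨h1, h2⟩
    have ht : ¬ IsTransitionEdge θ s a := by
      intro ht; rw [if_pos ht] at h1; simp at h1
    obtain ⟨w1, hw1⟩ := exists_return_of_not_transition θ ht
    obtain ⟨w2, hw2⟩ := ih (s * θ (FreeMonoid.of a)) h2
    refine ⟨w2 * w1, ?_⟩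
    rw [mul_ofList_cons, map_mul, ← mul_assoc, hw2, hw1]

/-- From the end of the path one can return to the endpoint of the last transition edge. -/
lemma last_return : ∀ (l : List A) (s : WithOne S) (q : ℕ) (e : WithOne S × A),
    (transEdgesFrom θ s l).length = q + 1 → (transEdgesFrom θ s l)[q]? = some e →
    ∃ w, s * θ (FreeMonoid.ofList l) * θ w = edgeEnd θ e := by
  intro l
  induction l with
  | nil => intro s q e h _; simp [transEdgesFrom_nil] at h
  | cons a l ih =>
    intro s q e hlen h
    rw [transEdgesFrom_cons] at hlen h
    by_cases ht : IsTransitionEdge θ s a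
    · rw [if_pos ht, List.singleton_append] at hlen h
      rcases q with _ | q
      · -- the head is the last transition edge: rest is empty
        rw [List.length_cons] at hlen
        have h2 : transEdgesFrom θ (s * θ (FreeMonoid.of a)) l = [] :=
          List.length_eq_zero_iff.mp (by omega)
        rw [List.getElem?_cons_zero] at h
        obtain rfl : (s, a) = e := by injection h
        obtain ⟨w, hw⟩ := return_of_nil θ l (s * θ (FreeMonoid.of a)) h2
        exact ⟨w, by rw [mul_ofList_cons]; exact hw⟩
      · rw [List.length_cons] at hlen
        rw [List.getElem?_cons_succ] at h
        obtain ⟨w, hw⟩ := ih (s * θ (FreeMonoid.of a)) q e (by omega) h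
        exact ⟨w, by rw [mul_ofList_cons]; exact hw⟩
    · rw [if_neg ht, List.nil_append] at hlen h
      obtain ⟨w, hw⟩ := ih (s * θ (FreeMonoid.of a)) q e hlen h
      exact ⟨w, by rw [mul_ofList_cons]; exact hw⟩

end Paths
section Keys
variable {A S : Type*} [Semigroup S] (θ : FreeMonoid A →* WithOne S)

lemma gshift_cons (t x : WithOne S) (b : A) (l : List (WithOne S × A)) :
    gshift θ t ((x, b) :: l) =
      if IsTransitionEdge θ (t * x) b then (t * x, b) :: gshift θ t l else gshift θ t l := by
  by_cases h : IsTransitionEdge θ (t * x) b <;> simp [gshift, List.filterMap_cons, h]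

lemma key1 : ∀ (l : List A) (s t : WithOne S) (r : ℕ), 0 < r → ∀ e,
    (transEdgesFrom θ s l)[r-1]? = some e →
    ((gshift θ t ((transEdgesFrom θ s l).take r)).length = 0 ∧
        ∃ w, t * s = t * edgeEnd θ e * θ w) ∨
    (1 ≤ (gshift θ t ((transEdgesFrom θ s l).take r)).length ∧
        ∃ e' w, (gshift θ t (transEdgesFrom θ s l))[(gshift θ t ((transEdgesFrom θ s l).take r)).length - 1]? = some e' ∧
          edgeEnd θ e' = t * edgeEnd θ e * θ w) := by
  intro l
  induction l with
  | nil => intro s t r hr e he; simp [transEdgesFrom_nil] at he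
  | cons a l ih =>
    intro s t r hr e he
    rw [transEdgesFrom_cons] at he ⊢
    by_cases ht : IsTransitionEdge θ s a
    · rw [if_pos ht, List.singleton_append] at he ⊢
      by_cases hts : IsTransitionEdge θ (t * s) a
      · -- the first edge survives
        by_cases hr1 : r = 1
        · subst hr1
          rw [List.getElem?_cons_zero] at he
          obtain rfl : (s, a) = e := by injection he
          right
          rw [List.take_succ_cons, List.take_zero, gshift_cons, if_pos hts, gshift_cons, if_pos hts]
          refine ⟨by simp [gshift], (t * s, a), 1, by simp [gshift], ?_⟩
          rw [edgeEnd, edgeEnd, map_one, mul_one, mul_assoc]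
        · have hr2 : r - 1 = (r - 2) + 1 := by omega
          rw [hr2, List.getElem?_cons_succ] at he
          have hr2' : (r-1) - 1 = r - 2 := by omega
          obtain hIH := ih (s * θ (FreeMonoid.of a)) t (r-1) (by omega) e (by rw [hr2']; exact he)
          rw [show r = (r-1)+1 by omega, List.take_succ_cons, gshift_cons, if_pos hts, gshift_cons, if_pos hts]
          rcases hIH with ⟨hj0, w, hw⟩ | ⟨hj1, e', w, he', hw⟩
          · right
            refine ⟨by simp, (t * s, a), w, by simp [hj0], ?_⟩
            rw [edgeEnd]
            simp only
            rw [mul_assoc t s, hw]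
          · right
            rw [List.length_cons]
            refine ⟨by omega, e', w, ?_, hw⟩
            have hidx : (gshift θ t ((transEdgesFrom θ (s * θ (FreeMonoid.of a)) l).take (r - 1))).length + 1 - 1
                = ((gshift θ t ((transEdgesFrom θ (s * θ (FreeMonoid.of a)) l).take (r - 1))).length - 1) + 1 := by omega
            rw [hidx, List.getElem?_cons_succ]
            exact he'
      · -- the first edge is killed by t
        obtain ⟨w0, hw0⟩ := exists_return_of_not_transition θ hts
        by_cases hr1 : r = 1
        · subst hr1
          rw [List.getElem?_cons_zero] at he
          obtain rfl : (s, a) = e := by injection he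
          left
          rw [List.take_succ_cons, List.take_zero, gshift_cons, if_neg hts]
          refine ⟨by simp [gshift], w0, ?_⟩
          rw [edgeEnd]
          simp only
          rw [← mul_assoc t s, hw0]
        · have hr2 : r - 1 = (r - 2) + 1 := by omega
          rw [hr2, List.getElem?_cons_succ] at he
          have hr2' : (r-1) - 1 = r - 2 := by omega
          obtain hIH := ih (s * θ (FreeMonoid.of a)) t (r-1) (by omega) e (by rw [hr2']; exact he)
          rw [show r = (r-1)+1 by omega, List.take_succ_cons, gshift_cons, if_neg hts, gshift_cons, if_neg hts]
          rcases hIH with ⟨hj0, w, hw⟩ | hR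
          · left
            refine ⟨hj0, w * w0, ?_⟩
            rw [map_mul, ← mul_assoc, ← hw, ← mul_assoc t s, hw0]
          · right
            exact hR
    · -- first edge not even a transition edge originally
      rw [if_neg ht, List.nil_append] at he ⊢
      have hts : ¬ IsTransitionEdge θ (t * s) a := fun h => ht (isTransitionEdge_of_shift θ h)
      obtain ⟨w0, hw0⟩ := exists_return_of_not_transition θ ht
      obtain hIH := ih (s * θ (FreeMonoid.of a)) t r hr e he
      rcases hIH with ⟨hj0, w, hw⟩ | hR
      · left
        refine ⟨hj0, w * w0, ?_⟩
        have hts2 : t * s = t * (s * θ (FreeMonoid.of a)) * θ w0 := by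
          rw [mul_assoc t, hw0]
        rw [map_mul, ← mul_assoc, ← hw]
        exact hts2
      · right
        exact hR

lemma key2 : ∀ (l : List A) (s t : WithOne S) (r : ℕ), 0 < r → ∀ e,
    (transEdgesFrom θ s l)[r-1]? = some e →
    ∀ q, (gshift θ t ((transEdgesFrom θ s l).take r)).length ≤ q →
    ∀ e', (gshift θ t (transEdgesFrom θ s l))[q]? = some e' →
    ∃ w, edgeEnd θ e' = t * edgeEnd θ e * θ w := by
  intro l
  induction l with
  | nil => intro s t r hr e he; simp [transEdgesFrom_nil] at he
  | cons a l ih =>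
    intro s t r hr e he q hq e' he'
    rw [transEdgesFrom_cons] at he he' hq
    by_cases ht : IsTransitionEdge θ s a
    · rw [if_pos ht, List.singleton_append] at he he' hq
      by_cases hr1 : r = 1
      · subst hr1
        rw [List.getElem?_cons_zero] at he
        obtain rfl : (s, a) = e := by injection he
        -- every later shifted edge endpoint is reachable from t * (s * θ a)
        have hLG : gshift θ t (transEdgesFrom θ (s * θ (FreeMonoid.of a)) l) =
            transEdgesFrom θ (t * (s * θ (FreeMonoid.of a))) l := (transEdgesFrom_shift θ l _ t).symm
        rw [List.take_succ_cons, List.take_zero, gshift_cons] at hq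
        rw [gshift_cons] at he'
        by_cases hts : IsTransitionEdge θ (t * s) a
        · rw [if_pos hts] at he' hq
          rw [List.length_cons] at hq
          rw [show q = (q-1)+1 by omega, List.getElem?_cons_succ, hLG] at he'
          obtain ⟨w, hw⟩ := end_mem θ l (t * (s * θ (FreeMonoid.of a))) (q-1) e' he'
          exact ⟨w, by rw [← hw, edgeEnd]⟩
        · rw [if_neg hts] at he' hq
          rw [hLG] at he'
          obtain ⟨w, hw⟩ := end_mem θ l (t * (s * θ (FreeMonoid.of a))) q e' he'
          exact ⟨w, by rw [← hw, edgeEnd]⟩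
      · have hr2 : r - 1 = (r - 2) + 1 := by omega
        rw [hr2, List.getElem?_cons_succ] at he
        have hr2' : (r-1) - 1 = r - 2 := by omega
        rw [show r = (r-1)+1 by omega, List.take_succ_cons, gshift_cons] at hq
        rw [gshift_cons] at he'
        by_cases hts : IsTransitionEdge θ (t * s) a
        · rw [if_pos hts] at he' hq
          rw [List.length_cons] at hq
          rw [show q = (q-1)+1 by omega, List.getElem?_cons_succ] at he'
          exact ih (s * θ (FreeMonoid.of a)) t (r-1) (by omega) e (by rw [hr2']; exact he) (q-1) (by omega) e' he'
        · rw [if_neg hts] at he' hq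
          exact ih (s * θ (FreeMonoid.of a)) t (r-1) (by omega) e (by rw [hr2']; exact he) q hq e' he'
    · rw [if_neg ht, List.nil_append] at he he' hq
      exact ih (s * θ (FreeMonoid.of a)) t r hr e he q hq e' he'

end Keys
section CP
variable {X : Type*}

noncomputable def cp : List X → List X → ℕ
  | a :: l, b :: l' => if a = b then cp l l' + 1 else 0
  | _, _ => 0

@[simp] lemma cp_nil_left (l : List X) : cp ([] : List X) l = 0 := by cases l <;> simp [cp]

@[simp] lemma cp_nil_right (l : List X) : cp l ([] : List X) = 0 := by cases l <;> simp [cp]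

lemma cp_cons (a b : X) (l l' : List X) :
    cp (a :: l) (b :: l') = if a = b then cp l l' + 1 else 0 := by simp [cp]

lemma cp_le_length_left : ∀ (l1 l2 : List X), cp l1 l2 ≤ l1.length := by
  intro l1
  induction l1 with
  | nil => simp
  | cons a l ih =>
    intro l2
    cases l2 with
    | nil => simp
    | cons b l' =>
      rw [cp_cons]
      by_cases h : a = b
      · rw [if_pos h, List.length_cons]; exact Nat.succ_le_succ (ih l')
      · rw [if_neg h]; omega

lemma cp_le_length_right : ∀ (l1 l2 : List X), cp l1 l2 ≤ l2.length := by
  intro l1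
  induction l1 with
  | nil => simp
  | cons a l ih =>
    intro l2
    cases l2 with
    | nil => simp
    | cons b l' =>
      rw [cp_cons]
      by_cases h : a = b
      · rw [if_pos h, List.length_cons]; exact Nat.succ_le_succ (ih l')
      · rw [if_neg h]; omega

lemma cp_take : ∀ (l1 l2 : List X), l1.take (cp l1 l2) = l2.take (cp l1 l2) := by
  intro l1
  induction l1 with
  | nil => simp
  | cons a l ih =>
    intro l2
    cases l2 with
    | nil => simp
    | cons b l' =>
      rw [cp_cons]
      by_cases h : a = b
      · rw [if_pos h, List.take_succ_cons, List.take_succ_cons, ih l', h]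
      · rw [if_neg h]; simp

lemma le_cp : ∀ (l1 l2 : List X) (i : ℕ), i ≤ l1.length → l1.take i = l2.take i → i ≤ cp l1 l2 := by
  intro l1
  induction l1 with
  | nil => intro l2 i h _; simp at h; omega
  | cons a l ih =>
    intro l2 i h htake
    rcases i with _ | i
    · omega
    cases l2 with
    | nil => simp [List.take_succ_cons] at htake
    | cons b l' =>
      rw [List.take_succ_cons, List.take_succ_cons] at htake
      injection htake with h1 h2
      rw [cp_cons, if_pos h1]
      have := ih l' i (by simpa using h) h2
      omega

lemma cp_append : ∀ (p l1 l2 : List X), cp (p ++ l1) (p ++ l2) = p.length + cp l1 l2 := by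
  intro p
  induction p with
  | nil => simp
  | cons a p ih =>
    intro l1 l2
    rw [List.cons_append, List.cons_append, cp_cons, if_pos rfl, ih]
    simp; omega

lemma cp_getElem? (l1 l2 : List X) (i : ℕ) (h : i < cp l1 l2) : l1[i]? = l2[i]? := by
  have h1 := cp_take l1 l2
  calc l1[i]? = (l1.take (cp l1 l2))[i]? := by rw [List.getElem?_take, if_pos h]
  _ = (l2.take (cp l1 l2))[i]? := by rw [h1]
  _ = l2[i]? := by rw [List.getElem?_take, if_pos h]

end CP

section Xi
variable {A S : Type*} [Semigroup S] (θ : FreeMonoid A →* WithOne S)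

lemma xi_eq_cp (u v : FreeMonoid A) :
    xi θ u v = cp (transEdges θ u) (transEdges θ v) := by
  apply le_antisymm
  · apply csSup_le ⟨0, by simp⟩
    rintro i ⟨h1, h2⟩
    exact le_cp _ _ i h1 h2
  · exact le_csSup ⟨(transEdges θ u).length, fun i hi => hi.1⟩
      ⟨cp_le_length_left _ _, cp_take _ _⟩

end Xi
section Misc
variable {A S : Type*} [Semigroup S] (θ : FreeMonoid A →* WithOne S)

lemma one_isTransitionEdge (hproper : ∀ u : FreeMonoid A, θ u = 1 → u = 1) (a : A) :
    IsTransitionEdge θ (1 : WithOne S) a := by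
  rintro ⟨w, hw⟩
  rw [one_mul, ← map_mul] at hw
  have := hproper _ hw
  have h2 := congrArg FreeMonoid.toList this
  rw [FreeMonoid.toList_mul, FreeMonoid.toList_of, FreeMonoid.toList_one] at h2
  simp at h2

lemma toList_eq_nil_iff (u : FreeMonoid A) : FreeMonoid.toList u = [] ↔ u = 1 :=
  ⟨fun h => FreeMonoid.toList.injective (by rw [h, FreeMonoid.toList_one]),
   fun h => by rw [h, FreeMonoid.toList_one]⟩

lemma transEdges_ne_nil (hproper : ∀ u : FreeMonoid A, θ u = 1 → u = 1)
    {u : FreeMonoid A} (hu : u ≠ 1) : transEdges θ u ≠ [] := by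
  rw [transEdges]
  cases htl : FreeMonoid.toList u with
  | nil => exact absurd ((toList_eq_nil_iff u).mp htl) hu
  | cons a l =>
    rw [transEdgesFrom_cons, if_pos (one_isTransitionEdge θ hproper a)]
    simp

lemma mul_eq_one_iff (u v : FreeMonoid A) : u * v = 1 ↔ u = 1 ∧ v = 1 := by
  constructor
  · intro h
    have h2 := congrArg FreeMonoid.toList h
    rw [FreeMonoid.toList_mul, FreeMonoid.toList_one, List.append_eq_nil_iff] at h2
    exact ⟨(toList_eq_nil_iff u).mp h2.1, (toList_eq_nil_iff v).mp h2.2⟩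
  · rintro ⟨rfl, rfl⟩; rw [mul_one]

lemma KRrel_refl (u : FreeMonoid A) : KRrel θ u u := by
  by_cases h : u = 1
  · exact Or.inl ⟨h, h⟩
  · exact Or.inr ⟨h, h, rfl, rfl⟩

lemma KRrel_mul_left {u v : FreeMonoid A} (γ : FreeMonoid A) (h : KRrel θ u v) :
    KRrel θ (γ * u) (γ * v) := by
  rcases h with ⟨rfl, rfl⟩ | ⟨hu, hv, hθ, hT⟩
  · exact KRrel_refl θ _
  · refine Or.inr ⟨fun hc => hu ((mul_eq_one_iff γ u).mp hc).2,
      fun hc => hv ((mul_eq_one_iff γ v).mp hc).2, by rw [map_mul, map_mul, hθ], ?_⟩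
    rw [transEdges_mul, transEdges_mul, hT]

lemma bddAbove_heights [Finite S] :
    BddAbove (Set.range fun s : WithOne S => height s) := by
  refine ⟨Nat.card (WithOne S), ?_⟩
  rintro _ ⟨x, rfl⟩
  exact height_le_card x

lemma two_mul_height_le_ell [Finite S] (s : WithOne S) : 2 * height s ≤ ell S := by
  have h : height s ≤ sSup (Set.range fun s : WithOne S => height s) :=
    le_csSup (bddAbove_heights) ⟨s, rfl⟩
  rw [ell]; omega

lemma lcD_of_ne (u v : FreeMonoid A) (h1 : ¬ KRrel θ u v) (h2 : xi θ u v ≠ 0) :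
    lcD θ u v = 2 * ((transEdges θ u)[xi θ u v - 1]?.elim 0 fun e => height (edgeEnd θ e)) -
      (if (∃ e e', (transEdges θ u)[xi θ u v]? = some e ∧ (transEdges θ v)[xi θ u v]? = some e' ∧
          edgeEnd θ e = edgeEnd θ e') then 0 else 1) := by
  rw [lcD, if_neg h1, if_neg h2]
  show (if (∃ e e', (transEdges θ u)[xi θ u v]? = some e ∧ (transEdges θ v)[xi θ u v]? = some e' ∧
          edgeEnd θ e = edgeEnd θ e')
      then 2 * ((transEdges θ u)[xi θ u v - 1]?.elim 0 fun e => height (edgeEnd θ e))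
      else 2 * ((transEdges θ u)[xi θ u v - 1]?.elim 0 fun e => height (edgeEnd θ e)) - 1) = _
  split_ifs with h3
  · omega
  · rfl

lemma lcD_le_ell [Finite S] (u v : FreeMonoid A) : lcD θ u v ≤ ell S := by
  by_cases h1 : KRrel θ u v
  · rw [lcD, if_pos h1]
  · by_cases h2 : xi θ u v = 0
    · rw [lcD, if_neg h1, if_pos h2]; exact Nat.zero_le _
    · rw [lcD_of_ne θ u v h1 h2]
      cases he : (transEdges θ u)[xi θ u v - 1]? with
      | none => simp
      | some e =>
        have := two_mul_height_le_ell (S := S) (edgeEnd θ e)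
        simp only [Option.elim]
        omega

end Misc
section Master
variable {A S : Type*} [Semigroup S] (θ : FreeMonoid A →* WithOne S)

@[simp] lemma gshift_nil (t : WithOne S) : gshift θ t [] = [] := rfl

lemma gshift_take_succ_length (t : WithOne S) (l : List (WithOne S × A)) (k : ℕ)
    (e : WithOne S × A) (hk : l[k]? = some e) :
    (gshift θ t (l.take (k+1))).length =
      (gshift θ t (l.take k)).length + (if IsTransitionEdge θ (t * e.1) e.2 then 1 else 0) := by
  rw [List.take_succ, hk, Option.toList_some, gshift_append]
  rw [show (e : WithOne S × A) = (e.1, e.2) from rfl, gshift_cons]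
  by_cases h : IsTransitionEdge θ (t * e.1) e.2
  · rw [if_pos h, if_pos h]; simp
  · rw [if_neg h, if_neg h]; simp

lemma gshift_getElem_at (t : WithOne S) (l : List (WithOne S × A)) (k : ℕ)
    (e : WithOne S × A) (hk : l[k]? = some e) (hs : IsTransitionEdge θ (t * e.1) e.2) :
    (gshift θ t l)[(gshift θ t (l.take k)).length]? = some (t * e.1, e.2) := by
  have hklt : k < l.length := by
    by_contra h
    rw [List.getElem?_eq_none (by omega)] at hk
    exact absurd hk (by simp)
  have hge : l[k] = e := by
    have := List.getElem?_eq_getElem hklt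
    rw [hk] at this; injection this with h'; exact h'.symm
  have hsplit : l = l.take k ++ (e :: l.drop (k+1)) := by
    conv_lhs => rw [← List.take_append_drop k l, List.drop_eq_getElem_cons hklt, hge]
  set n := (gshift θ t (l.take k)).length with hn
  conv_lhs => rw [hsplit, gshift_append,
    show (e : WithOne S × A) = (e.1, e.2) from rfl, gshift_cons, if_pos hs]
  rw [hn, List.getElem?_append_right (le_refl _), Nat.sub_self]
  exact List.getElem?_cons_zero

lemma master (γ u : FreeMonoid A) (hγne : transEdges θ γ ≠ [])
    (r c' : ℕ) (hr : 0 < r) (E : WithOne S × A)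
    (he : (transEdges θ u)[r-1]? = some E)
    (hj : (gshift θ (θ γ) ((transEdges θ u).take r)).length ≤ c')
    (hc : c' ≤ (gshift θ (θ γ) (transEdges θ u)).length) :
    ∃ e'' w, (transEdges θ (γ * u))[(transEdges θ γ).length + c' - 1]? = some e'' ∧
      edgeEnd θ e'' = θ γ * edgeEnd θ E * θ w := by
  have hdef : transEdgesFrom θ 1 (FreeMonoid.toList u) = transEdges θ u := rfl
  have hdefγ : transEdgesFrom θ 1 (FreeMonoid.toList γ) = transEdges θ γ := rfl
  have hm : 0 < (transEdges θ γ).length := List.length_pos_iff.mpr hγne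
  rw [transEdges_mul]
  have hk1 := key1 θ (FreeMonoid.toList u) 1 (θ γ) r hr E (by rw [hdef]; exact he)
  rw [hdef] at hk1
  rcases Nat.eq_zero_or_pos c' with hc0 | hcpos
  · subst hc0
    have hidx : (transEdges θ γ).length + 0 - 1 < (transEdges θ γ).length := by omega
    obtain ⟨e'', he''⟩ : ∃ e'', (transEdges θ γ)[(transEdges θ γ).length + 0 - 1]? = some e'' :=
      ⟨_, List.getElem?_eq_getElem hidx⟩
    obtain ⟨w₀, hw₀⟩ := last_return θ (FreeMonoid.toList γ) 1 ((transEdges θ γ).length + 0 - 1) e''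
      (by rw [hdefγ]; omega) (by rw [hdefγ]; exact he'')
    rcases hk1 with ⟨hj0, w, hw⟩ | ⟨hj1, _⟩
    · rw [mul_one] at hw
      refine ⟨e'', w * w₀, ?_, ?_⟩
      · rw [List.getElem?_append, if_pos hidx]
        exact he''
      · have hθw : θ γ * θ w₀ = edgeEnd θ e'' := by
          rw [← hw₀, one_mul]
          rfl
        rw [← hθw, map_mul]
        conv_lhs => rw [hw]
        rw [mul_assoc]
    · omega
  · have hlt : c' - 1 < (gshift θ (θ γ) (transEdges θ u)).length := by omega
    have hidxP : (transEdges θ γ).length ≤ (transEdges θ γ).length + c' - 1 := by omega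
    have hidx2 : (transEdges θ γ).length + c' - 1 - (transEdges θ γ).length = c' - 1 := by omega
    by_cases hcj : (gshift θ (θ γ) ((transEdges θ u).take r)).length = c'
    · rcases hk1 with ⟨hj0, _⟩ | ⟨hj1, e', w, he', hw⟩
      · omega
      · rw [hcj] at he'
        refine ⟨e', w, ?_, hw⟩
        rw [List.getElem?_append_right hidxP, hidx2]
        exact he'
    · obtain ⟨e'', he''⟩ : ∃ e'', (gshift θ (θ γ) (transEdges θ u))[c' - 1]? = some e'' :=
        ⟨_, List.getElem?_eq_getElem hlt⟩
      obtain ⟨w, hw⟩ := key2 θ (FreeMonoid.toList u) 1 (θ γ) r hr E (by rw [hdef]; exact he)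
        (c' - 1) (by rw [hdef]; omega) e'' (by rw [hdef]; exact he'')
      refine ⟨e'', w, ?_, hw⟩
      rw [List.getElem?_append_right hidxP, hidx2]
      exact he''

end Master
end KRHolonomy

open KRHolonomy in
/-- For all `α, β, γ ∈ T¹ = KR_right(S,A)¹`, `D(γα, γβ) ≥ D(α, β)`. -/
theorem lcD_mul_left_ge {A S : Type*} [Finite A] [Semigroup S] [Finite S]
    (θ : FreeMonoid A →* WithOne S)
    (hgen : ∀ s : S, ∃ u : FreeMonoid A, θ u = (s : WithOne S))
    (hproper : ∀ u : FreeMonoid A, θ u = 1 → u = 1)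
    (α β γ : FreeMonoid A) :
    lcD θ (γ * α) (γ * β) ≥ lcD θ α β := by
  by_cases hγ1 : γ = 1
  · subst hγ1; rw [one_mul, one_mul]
  by_cases hab : KRrel θ α β
  · have h1 : lcD θ α β = ell S := by rw [lcD, if_pos hab]
    have h2 : lcD θ (γ * α) (γ * β) = ell S := by rw [lcD, if_pos (KRrel_mul_left θ γ hab)]
    rw [h1, h2]
  by_cases hgab : KRrel θ (γ * α) (γ * β)
  · have h2 : lcD θ (γ * α) (γ * β) = ell S := by rw [lcD, if_pos hgab]
    rw [h2]; exact lcD_le_ell θ α β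
  by_cases hk0 : xi θ α β = 0
  · have h1 : lcD θ α β = 0 := by rw [lcD, if_neg hab, if_pos hk0]
    rw [h1]; exact Nat.zero_le _
  -- MAIN CASE
  have hkpos : 0 < xi θ α β := Nat.pos_of_ne_zero hk0
  have hxk : xi θ α β = cp (transEdges θ α) (transEdges θ β) := xi_eq_cp θ α β
  have hkle : xi θ α β ≤ (transEdges θ α).length := hxk ▸ cp_le_length_left _ _
  obtain ⟨E, hE⟩ : ∃ E, (transEdges θ α)[xi θ α β - 1]? = some E :=
    ⟨_, List.getElem?_eq_getElem (by omega)⟩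
  have hPne := transEdges_ne_nil θ hproper hγ1
  have hmpos : 0 < (transEdges θ γ).length := List.length_pos_iff.mpr hPne
  have hTα := transEdges_mul θ γ α
  have hTβ := transEdges_mul θ γ β
  have hxiγ : xi θ (γ * α) (γ * β) =
      (transEdges θ γ).length +
        cp (gshift θ (θ γ) (transEdges θ α)) (gshift θ (θ γ) (transEdges θ β)) := by
    rw [xi_eq_cp, hTα, hTβ, cp_append]
  have htake : (transEdges θ α).take (xi θ α β) = (transEdges θ β).take (xi θ α β) := by
    rw [hxk]; exact cp_take _ _
  have hsplit1 : gshift θ (θ γ) (transEdges θ α) =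
      gshift θ (θ γ) ((transEdges θ α).take (xi θ α β)) ++
        gshift θ (θ γ) ((transEdges θ α).drop (xi θ α β)) := by
    conv_lhs => rw [← List.take_append_drop (xi θ α β) (transEdges θ α)]
    rw [gshift_append]
  have hsplit2 : gshift θ (θ γ) (transEdges θ β) =
      gshift θ (θ γ) ((transEdges θ β).take (xi θ α β)) ++
        gshift θ (θ γ) ((transEdges θ β).drop (xi θ α β)) := by
    conv_lhs => rw [← List.take_append_drop (xi θ α β) (transEdges θ β)]
    rw [gshift_append]
  have hJle : (gshift θ (θ γ) ((transEdges θ α).take (xi θ α β))).length ≤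
      cp (gshift θ (θ γ) (transEdges θ α)) (gshift θ (θ γ) (transEdges θ β)) := by
    apply le_cp
    · rw [hsplit1, List.length_append]; omega
    · rw [hsplit1, hsplit2, ← htake, List.take_left, List.take_left]
  have hcle1 : cp (gshift θ (θ γ) (transEdges θ α)) (gshift θ (θ γ) (transEdges θ β)) ≤
      (gshift θ (θ γ) (transEdges θ α)).length := cp_le_length_left _ _
  have hcle2 : cp (gshift θ (θ γ) (transEdges θ α)) (gshift θ (θ γ) (transEdges θ β)) ≤
      (gshift θ (θ γ) (transEdges θ β)).length := cp_le_length_right _ _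
  have hxiγ0 : xi θ (γ * α) (γ * β) ≠ 0 := by rw [hxiγ]; omega
  obtain ⟨e'', w_v, he'', hv⟩ := master θ γ α hPne (xi θ α β)
    (cp (gshift θ (θ γ) (transEdges θ α)) (gshift θ (θ γ) (transEdges θ β)))
    hkpos E hE hJle hcle1
  rw [lcD_of_ne θ (γ*α) (γ*β) hgab hxiγ0, lcD_of_ne θ α β hab hk0, hxiγ, he'', hE]
  have helim1 : ((some E).elim 0 fun e => height (edgeEnd θ e)) = height (edgeEnd θ E) := rfl
  have helim2 : ((some e'').elim 0 fun e => height (edgeEnd θ e)) = height (edgeEnd θ e'') := rfl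
  rw [helim1, helim2]
  have hhE : height (edgeEnd θ E) ≤ height (edgeEnd θ e'') :=
    height_le_of_leJ ⟨θ γ, θ w_v, hv⟩
  by_cases hC : ∃ e e', (transEdges θ α)[xi θ α β]? = some e ∧
      (transEdges θ β)[xi θ α β]? = some e' ∧ edgeEnd θ e = edgeEnd θ e'
  case neg =>
    rw [if_neg hC]
    split_ifs <;> omega
  case pos =>
    have hC' := hC
    obtain ⟨ep, ep', hna, hnb, hends⟩ := hC'
    rw [if_pos hC]
    -- strict comparison z <_J end(E)
    have htrans_ep : IsTransitionEdge θ ep.1 ep.2 :=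
      (source_mem θ (FreeMonoid.toList α) 1 (xi θ α β) ep hna).2
    obtain ⟨wc, hwc⟩ := chain_source θ (FreeMonoid.toList α) 1 (xi θ α β - 1) E ep hE
      (by rw [show xi θ α β - 1 + 1 = xi θ α β by omega]; exact hna)
    have hltJ : ltJ (edgeEnd θ ep) (edgeEnd θ E) :=
      ltJ_of_ltJ_of_leJ (ltJ_end_of_transition θ hgen htrans_ep)
        ⟨1, θ wc, by rw [one_mul]; exact hwc.symm⟩
    by_cases hba : IsTransitionEdge θ (θ γ * ep.1) ep.2 ∧ IsTransitionEdge θ (θ γ * ep'.1) ep'.2 ∧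
        cp (gshift θ (θ γ) (transEdges θ α)) (gshift θ (θ γ) (transEdges θ β)) =
          (gshift θ (θ γ) ((transEdges θ α).take (xi θ α β))).length
    · -- branch (a): the next shifted edges both exist with equal endpoints
      obtain ⟨hsa, hsb, hcj⟩ := hba
      have hGa := gshift_getElem_at θ (θ γ) (transEdges θ α) (xi θ α β) ep hna hsa
      have hGb := gshift_getElem_at θ (θ γ) (transEdges θ β) (xi θ α β) ep' hnb hsb
      have hJJ' : (gshift θ (θ γ) ((transEdges θ β).take (xi θ α β))).length =
          (gshift θ (θ γ) ((transEdges θ α).take (xi θ α β))).length := by rw [htake]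
      rw [hJJ'] at hGb
      have hCg : ∃ e e', (transEdges θ (γ * α))[(transEdges θ γ).length +
            cp (gshift θ (θ γ) (transEdges θ α)) (gshift θ (θ γ) (transEdges θ β))]? = some e ∧
          (transEdges θ (γ * β))[(transEdges θ γ).length +
            cp (gshift θ (θ γ) (transEdges θ α)) (gshift θ (θ γ) (transEdges θ β))]? = some e' ∧
          edgeEnd θ e = edgeEnd θ e' := by
        refine ⟨(θ γ * ep.1, ep.2), (θ γ * ep'.1, ep'.2), ?_, ?_, ?_⟩
        · rw [hTα, List.getElem?_append_right (by omega : (transEdges θ γ).length ≤ _), Nat.add_sub_cancel_left, hcj]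
          exact hGa
        · rw [hTβ, List.getElem?_append_right (by omega : (transEdges θ γ).length ≤ _), Nat.add_sub_cancel_left, hcj]
          exact hGb
        · show θ γ * ep.1 * θ (FreeMonoid.of ep.2) = θ γ * ep'.1 * θ (FreeMonoid.of ep'.2)
          rw [mul_assoc, mul_assoc]
          congr 1
      rw [if_pos hCg]
      omega
    · -- strict cases
      have hK : ∃ w₂, edgeEnd θ e'' = θ γ * edgeEnd θ ep * θ w₂ := by
        by_cases hcj : cp (gshift θ (θ γ) (transEdges θ α)) (gshift θ (θ γ) (transEdges θ β)) =
            (gshift θ (θ γ) ((transEdges θ α).take (xi θ α β))).length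
        · by_cases hsa : IsTransitionEdge θ (θ γ * ep.1) ep.2
          · -- here ¬hsb must hold
            have hsb : ¬ IsTransitionEdge θ (θ γ * ep'.1) ep'.2 := by
              intro hsb; exact hba ⟨hsa, hsb, hcj⟩
            -- master on the β side with r = k+1
            have hlen2 := gshift_take_succ_length θ (θ γ) (transEdges θ β) (xi θ α β) ep' hnb
            rw [if_neg hsb] at hlen2
            have hJJ' : (gshift θ (θ γ) ((transEdges θ β).take (xi θ α β))).length =
                (gshift θ (θ γ) ((transEdges θ α).take (xi θ α β))).length := by rw [htake]
            obtain ⟨e₂, w₂, he₂, hv₂⟩ := master θ γ β hPne (xi θ α β + 1)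
              (cp (gshift θ (θ γ) (transEdges θ α)) (gshift θ (θ γ) (transEdges θ β)))
              (by omega) ep' (by exact hnb)
              (by rw [hlen2, hJJ']; omega) hcle2
            -- identify e₂ with e'' via the common prefix
            have hcpγ : cp (transEdges θ (γ * α)) (transEdges θ (γ * β)) =
                (transEdges θ γ).length +
                  cp (gshift θ (θ γ) (transEdges θ α)) (gshift θ (θ γ) (transEdges θ β)) := by
              rw [hTα, hTβ, cp_append]
            have heq := cp_getElem? (transEdges θ (γ * α)) (transEdges θ (γ * β))
              ((transEdges θ γ).length +
                cp (gshift θ (θ γ) (transEdges θ α)) (gshift θ (θ γ) (transEdges θ β)) - 1)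
              (by rw [hcpγ]; omega)
            rw [he'', he₂] at heq
            obtain rfl : e'' = e₂ := by injection heq with h'; try exact h'
            exact ⟨w₂, by rw [hv₂, ← hends]⟩
          · -- E_{k+1} killed on the α side: master on α with r = k+1
            have hlen1 := gshift_take_succ_length θ (θ γ) (transEdges θ α) (xi θ α β) ep hna
            rw [if_neg hsa] at hlen1
            obtain ⟨e₂, w₂, he₂, hv₂⟩ := master θ γ α hPne (xi θ α β + 1)
              (cp (gshift θ (θ γ) (transEdges θ α)) (gshift θ (θ γ) (transEdges θ β)))
              (by omega) ep (by exact hna)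
              (by rw [hlen1]; omega) hcle1
            rw [he''] at he₂
            obtain rfl : e'' = e₂ := by injection he₂ with h'; try exact h'
            exact ⟨w₂, hv₂⟩
        · -- c' > J : master on α with r = k+1 works regardless
          have hlen1 := gshift_take_succ_length θ (θ γ) (transEdges θ α) (xi θ α β) ep hna
          obtain ⟨e₂, w₂, he₂, hv₂⟩ := master θ γ α hPne (xi θ α β + 1)
            (cp (gshift θ (θ γ) (transEdges θ α)) (gshift θ (θ γ) (transEdges θ β)))
            (by omega) ep (by exact hna)
            (by rw [hlen1]; split_ifs <;> omega) hcle1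
          rw [he''] at he₂
          obtain rfl : e'' = e₂ := by injection he₂ with h'; try exact h'
          exact ⟨w₂, hv₂⟩
      obtain ⟨w₂, hv₂⟩ := hK
      have h1 : height (edgeEnd θ E) < height (edgeEnd θ ep) := height_lt_of_ltJ hltJ
      have h2 : height (edgeEnd θ ep) ≤ height (edgeEnd θ e'') :=
        height_le_of_leJ ⟨θ γ, θ w₂, hv₂⟩
      split_ifs <;> omega
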